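/- Let V ∈ ℝ^{d×d} be symmetric positive definite, let φ ∈ ℝ^d, and let b > 0. Then the maximum of trace(φφᵀ X) over all symmetric positive semidefinite matrices X ∈ ℝ^{d×d} with trace(X V) ≤ b equals b · φᵀ V^{−1} φ. -/

import Mathlib

open Matrix

lemma aux_vecMulVec_mulVec {d : ℕ} (a b x : Fin d → ℝ) :
    (vecMulVec a b) *ᵥ x = (b ⬝ᵥ x) • a := by
  funext i
  simp [vecMulVec, mulVec, dotProduct, Finset.mul_sum, mul_comm, mul_left_comm]

lemma aux_trace_vecMulVec_mul {d : ℕ} (a b : Fin d → ℝ) (C : Matrix (Fin d) (Fin d) ℝ) :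
    (vecMulVec a b * C).trace = b ⬝ᵥ (C *ᵥ a) := by
  simp only [trace, diag, mul_apply, vecMulVec_apply, dotProduct, mulVec]
  rw [Finset.sum_comm]
  congr 1; ext j
  simp [Finset.mul_sum, dotProduct, mul_comm, mul_left_comm]

lemma aux_trace_nonneg {d : ℕ} {X : Matrix (Fin d) (Fin d) ℝ} (hX : X.PosSemidef) :
    0 ≤ X.trace := by
  have := fun i => hX.dotProduct_mulVec_nonneg (Pi.single i 1)
  simp only [star_trivial] at this
  have h : ∀ i, 0 ≤ X i i := by
    intro i
    simpa [dotProduct, mulVec, Pi.single_apply] using this i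
  exact Finset.sum_nonneg fun i _ => h i

lemma aux_trace_mul_nonneg {d : ℕ} {X M : Matrix (Fin d) (Fin d) ℝ}
    (hX : X.PosSemidef) (hM : M.PosSemidef) : 0 ≤ (X * M).trace := by
  obtain ⟨B, hB⟩ : ∃ B : Matrix (Fin d) (Fin d) ℝ, X = Bᴴ * B := by
    open scoped MatrixOrder in exact CStarAlgebra.nonneg_iff_eq_star_mul_self.mp hX.nonneg
  have hP : (B * M * Bᵀ).PosSemidef := by
    have := hM.mul_mul_conjTranspose_same B
    simpa [conjTranspose_eq_transpose_of_trivial] using this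
  calc (X * M).trace = (Bᵀ * B * M).trace := by
        rw [hB]; simp [conjTranspose_eq_transpose_of_trivial]
    _ = (B * M * Bᵀ).trace := by rw [← trace_mul_cycle]
    _ ≥ 0 := aux_trace_nonneg hP

lemma aux_vecMulVec_posSemidef {d : ℕ} (u : Fin d → ℝ) : (vecMulVec u u).PosSemidef := by
  rw [posSemidef_iff_dotProduct_mulVec]
  constructor
  · apply IsHermitian.ext
    intro i j
    simp [vecMulVec_apply, mul_comm]
  · intro x
    simp only [star_trivial, aux_vecMulVec_mulVec, dotProduct_smul, smul_eq_mul]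
    rw [dotProduct_comm]
    exact mul_self_nonneg _

lemma aux_smul_posSemidef {d : ℕ} {X : Matrix (Fin d) (Fin d) ℝ} (hX : X.PosSemidef)
    {r : ℝ} (hr : 0 ≤ r) : (r • X).PosSemidef := by
  rw [posSemidef_iff_dotProduct_mulVec]
  constructor
  · apply IsHermitian.ext
    intro i j
    simp only [Matrix.smul_apply, smul_eq_mul, star_trivial]
    rw [show X j i = X i j from by simpa using hX.1.apply i j]
  · intro x
    have := hX.dotProduct_mulVec_nonneg x
    simp only [star_trivial] at this ⊢
    rw [smul_mulVec, dotProduct_smul, smul_eq_mul]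
    exact mul_nonneg hr this

lemma aux_schur {d : ℕ} (V : Matrix (Fin d) (Fin d) ℝ) (hV : V.PosDef) (φ : Fin d → ℝ) :
    ((φ ⬝ᵥ V⁻¹ *ᵥ φ) • V - vecMulVec φ φ).PosSemidef := by
  set u : Fin d → ℝ := V⁻¹ *ᵥ φ with hu
  set c : ℝ := φ ⬝ᵥ u with hcdef
  have hVu : V *ᵥ u = φ := by
    rw [hu, mulVec_mulVec, mul_nonsing_inv V hV.det_pos.ne'.isUnit, one_mulVec]
  have hVt : Vᵀ = V := hV.isHermitian.eq
  have hsym : ∀ y z : Fin d → ℝ, y ⬝ᵥ V *ᵥ z = z ⬝ᵥ V *ᵥ y := by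
    intro y z
    rw [dotProduct_mulVec, ← mulVec_transpose, hVt, dotProduct_comm]
  have e2 : ∀ x, u ⬝ᵥ V *ᵥ x = φ ⬝ᵥ x := by
    intro x; rw [hsym, hVu, dotProduct_comm]
  have e3 : u ⬝ᵥ V *ᵥ u = c := by rw [e2, hcdef, dotProduct_comm]
  have hq : ∀ y, 0 ≤ y ⬝ᵥ V *ᵥ y := fun y => by simpa using hV.posSemidef.dotProduct_mulVec_nonneg y
  have hc0 : 0 ≤ c := by rw [← e3]; exact hq u
  have key : ∀ x, (φ ⬝ᵥ x) * (φ ⬝ᵥ x) ≤ c * (x ⬝ᵥ V *ᵥ x) := by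
    intro x
    rcases eq_or_lt_of_le hc0 with hc | hc
    · have hu0 : u = 0 := by
        by_contra h
        have := hV.dotProduct_mulVec_pos h
        simp only [star_trivial] at this
        rw [e3, ← hc] at this
        exact lt_irrefl 0 this
      have hφ0 : φ = 0 := by rw [← hVu, hu0, mulVec_zero]
      simp [hφ0]
      exact mul_nonneg hc0 (hq x)
    · set t : ℝ := (φ ⬝ᵥ x) / c with ht
      have h0 : 0 ≤ (x - t • u) ⬝ᵥ V *ᵥ (x - t • u) := hq _
      have e1 : x ⬝ᵥ V *ᵥ u = φ ⬝ᵥ x := by rw [hsym]; exact e2 x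
      simp only [mulVec_sub, mulVec_smul, sub_dotProduct, dotProduct_sub,
        smul_dotProduct, dotProduct_smul, smul_eq_mul, e1, e2, e3] at h0
      have htc : t * c = φ ⬝ᵥ x := div_mul_cancel₀ _ (ne_of_gt hc)
      nlinarith [mul_le_mul_of_nonneg_left h0 (le_of_lt hc)]
  rw [posSemidef_iff_dotProduct_mulVec]
  constructor
  · apply IsHermitian.ext
    intro i j
    simp only [Matrix.sub_apply, Matrix.smul_apply, vecMulVec_apply, smul_eq_mul, star_trivial]
    rw [show V j i = V i j from by simpa using hV.isHermitian.apply i j]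
    ring
  · intro x
    simp only [star_trivial, sub_mulVec, dotProduct_sub, smul_mulVec,
      dotProduct_smul, smul_eq_mul, aux_vecMulVec_mulVec]
    rw [dotProduct_comm x φ]
    linarith [key x]

/-- Let `V ∈ ℝ^{d×d}` be symmetric positive definite, `φ ∈ ℝ^d`, `b > 0`.
Then the maximum of `trace(φφᵀ X)` over all symmetric positive semidefinite `X` with
`trace(X V) ≤ b` equals `b · φᵀ V⁻¹ φ`. -/
theorem stmt19 (d : ℕ) (V : Matrix (Fin d) (Fin d) ℝ) (hV : V.PosDef)
    (φ : Fin d → ℝ) (b : ℝ) (hb : 0 < b) :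
    IsGreatest {v : ℝ | ∃ X : Matrix (Fin d) (Fin d) ℝ,
        X.PosSemidef ∧ (X * V).trace ≤ b ∧ v = (Matrix.vecMulVec φ φ * X).trace}
      (b * (φ ⬝ᵥ V⁻¹.mulVec φ)) := by
  set u : Fin d → ℝ := V⁻¹ *ᵥ φ with hu
  set c : ℝ := φ ⬝ᵥ u with hcdef
  have hVu : V *ᵥ u = φ := by
    rw [hu, mulVec_mulVec, mul_nonsing_inv V hV.det_pos.ne'.isUnit, one_mulVec]
  have hVt : Vᵀ = V := hV.isHermitian.eq
  have hsym : ∀ y z : Fin d → ℝ, y ⬝ᵥ V *ᵥ z = z ⬝ᵥ V *ᵥ y := by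
    intro y z
    rw [dotProduct_mulVec, ← mulVec_transpose, hVt, dotProduct_comm]
  have e2 : ∀ x, u ⬝ᵥ V *ᵥ x = φ ⬝ᵥ x := by
    intro x; rw [hsym, hVu, dotProduct_comm]
  have e3 : u ⬝ᵥ V *ᵥ u = c := by rw [e2, hcdef, dotProduct_comm]
  have hq : ∀ y, 0 ≤ y ⬝ᵥ V *ᵥ y := fun y => by simpa using hV.posSemidef.dotProduct_mulVec_nonneg y
  have hc0 : 0 ≤ c := by rw [← e3]; exact hq u
  constructor
  · -- membership
    rcases eq_or_lt_of_le hc0 with hc | hc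
    · exact ⟨0, PosSemidef.zero, by simp [hb.le], by simp [← hc]⟩
    · refine ⟨(b / c) • vecMulVec u u,
        aux_smul_posSemidef (aux_vecMulVec_posSemidef u) (by positivity), ?_, ?_⟩
      · rw [smul_mul_assoc, trace_smul, aux_trace_vecMulVec_mul, e3, smul_eq_mul,
          div_mul_cancel₀ _ (ne_of_gt hc)]
      · rw [mul_smul_comm, trace_smul, aux_trace_vecMulVec_mul, smul_eq_mul,
          aux_vecMulVec_mulVec, dotProduct_smul, smul_eq_mul]
        rw [dotProduct_comm u φ, ← hcdef]
        field_simp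
  · -- upper bound
    rintro v ⟨X, hX, htr, rfl⟩
    have hM := aux_schur V hV φ
    have h4 := aux_trace_mul_nonneg hX hM
    rw [Matrix.mul_sub, trace_sub, Matrix.mul_smul, trace_smul, smul_eq_mul,
      trace_mul_comm X (vecMulVec φ φ)] at h4
    nlinarith [mul_le_mul_of_nonneg_left htr hc0]
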